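/- arXiv:2401.17577 — 3 statements merged into one kernel-verified Lean document; each statement's English description precedes it below -/
import Mathlib

section
/- Let (Ω, ℱ) be a measurable space, let π and ρ be probability measures on Ω with π absolutely continuous with respect to ρ, and let F : Ω → ℝ be a measurable function such that F is π-integrable and e^F is ρ-integrable. Then ∫_Ω F dπ − log ∫_Ω e^F dρ ≤ KL(π‖ρ). -/
open MeasureTheory Real ENNReal
open scoped Classical

/-- The Kullback–Leibler divergence `KL(q‖p)`, equal to `∫ log (dq/dp) dq` when `q` is
absolutely continuous with respect to `p` (and the integral is well defined),
and `+∞` otherwise. -/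
noncomputable def klDiv {Ω : Type*} [MeasurableSpace Ω] (q p : Measure Ω) : ℝ≥0∞ :=
  if q ≪ p ∧ Integrable (llr q p) q then ENNReal.ofReal (∫ x, llr q p x ∂q) else ⊤

/-- Nonnegativity of the KL integral for probability measures. -/
lemma integral_llr_nonneg_aux {Ω : Type*} [MeasurableSpace Ω]
    (μ ν : Measure Ω) [IsProbabilityMeasure μ] [IsProbabilityMeasure ν]
    (hμν : μ ≪ ν) (h : Integrable (llr μ ν) μ) :
    0 ≤ ∫ x, llr μ ν x ∂μ := by
  have h_eq : ∫ x, llr ν μ x ∂μ = - ∫ x, llr μ ν x ∂μ := by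
    rw [← integral_neg]
    exact integral_congr_ae (MeasureTheory.neg_llr hμν).symm
  have h_int_neg : Integrable (llr ν μ) μ :=
    (integrable_congr (MeasureTheory.neg_llr hμν)).mp h.neg
  have h_int_g : Integrable (fun x ↦ (ν.rnDeriv μ x).toReal) μ :=
    Measure.integrable_toReal_rnDeriv
  have h_le : ∫ x, llr ν μ x ∂μ ≤ ∫ x, ((ν.rnDeriv μ x).toReal - 1) ∂μ := by
    refine integral_mono_ae h_int_neg (h_int_g.sub (integrable_const 1)) ?_
    filter_upwards [Measure.rnDeriv_pos' hμν, Measure.rnDeriv_lt_top ν μ]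
      with x hx_pos hx_lt
    have hg_pos : 0 < (ν.rnDeriv μ x).toReal := ENNReal.toReal_pos hx_pos.ne' hx_lt.ne
    exact Real.log_le_sub_one_of_pos hg_pos
  have h_int_le : ∫ x, ((ν.rnDeriv μ x).toReal - 1) ∂μ ≤ 0 := by
    rw [integral_sub h_int_g (integrable_const 1)]
    simp only [integral_const, measure_univ, probReal_univ, ENNReal.toReal_one, smul_eq_mul, one_mul]
    have : ∫ x, (ν.rnDeriv μ x).toReal ∂μ ≤ (ν Set.univ).toReal := by
      rw [← setIntegral_univ]
      exact Measure.setIntegral_toReal_rnDeriv_le (measure_ne_top ν _)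
    simp only [measure_univ, ENNReal.toReal_one] at this
    linarith
  have := h_le.trans h_int_le
  rw [h_eq] at this
  linarith

/-- **Donsker–Varadhan lower bound.** For probability measures `π ≪ ρ` on `Ω` and any
measurable `F : Ω → ℝ` with `F` `π`-integrable and `e^F` `ρ`-integrable,
`∫ F dπ − log ∫ e^F dρ ≤ KL(π‖ρ)`. -/
theorem donsker_varadhan_le_klDiv {Ω : Type*} [MeasurableSpace Ω]
    (P ρ : Measure Ω) [IsProbabilityMeasure P] [IsProbabilityMeasure ρ]
    (hac : P ≪ ρ) (F : Ω → ℝ) (hF : Measurable F)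
    (hFP : Integrable F P) (hFρ : Integrable (fun x => Real.exp (F x)) ρ) :
    ENNReal.ofReal (∫ x, F x ∂P - Real.log (∫ x, Real.exp (F x) ∂ρ)) ≤ klDiv P ρ := by
  by_cases h_int : Integrable (llr P ρ) P
  · rw [klDiv, if_pos ⟨hac, h_int⟩]
    refine ENNReal.ofReal_le_ofReal ?_
    set ν := ρ.tilted F
    have hν : IsProbabilityMeasure ν := isProbabilityMeasure_tilted hFρ
    have hPν : P ≪ ν := hac.trans (absolutelyContinuous_tilted hFρ)
    have h_eq : ∫ x, llr P ν x ∂P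
        = ∫ x, llr P ρ x ∂P - ∫ x, F x ∂P + Real.log (∫ x, Real.exp (F x) ∂ρ) :=
      integral_llr_tilted_right hac hFP hFρ h_int
    have h_int_ν : Integrable (llr P ν) P :=
      integrable_llr_tilted_right hac hFP h_int hFρ
    have h_nonneg : 0 ≤ ∫ x, llr P ν x ∂P := integral_llr_nonneg_aux P ν hPν h_int_ν
    rw [h_eq] at h_nonneg
    linarith
  · rw [klDiv, if_neg (fun h => h_int h.2)]
    exact le_top
end

section
/- Let (S, 𝒮, μ) be a probability space of channel side information, (Ω, ℱ) a measurable space of hypothesis–sample pairs, p a probability measure on Ω, and s ↦ q_s a Markov kernel from S to Ω. Suppose the loss l : Ω → ℝ is σ-sub-Gaussian under p, is q_s-integrable for μ-almost every s, that each q_s is absolutely continuous with respect to p, that s ↦ KL(q_s‖p) is μ-integrable, and that s ↦ |E_{q_s}[l] − E_p[l]| is μ-integrable. Then the wireless risk discrepancy satisfies ∫_S |E_{q_s}[l] − E_p[l]| dμ(s) ≤ σ √(2 ∫_S KL(q_s‖p) dμ(s)). -/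
open MeasureTheory Real ENNReal ProbabilityTheory
open scoped Classical

/-- A function `l : Ω → ℝ` is `σ`-sub-Gaussian under a probability measure `p` if it is
`p`-integrable and for all `λ ∈ ℝ`, `log E_p[exp (λ (l − E_p[l]))] ≤ λ²σ²/2`
(the moment generating function being well defined). -/
def IsSubGaussian {Ω : Type*} [MeasurableSpace Ω] (p : Measure Ω) (σ : ℝ) (l : Ω → ℝ) : Prop :=
  0 ≤ σ ∧ Integrable l p ∧ ∀ lam : ℝ,
    Integrable (fun x => Real.exp (lam * (l x - ∫ y, l y ∂p))) p ∧
    Real.log (∫ x, Real.exp (lam * (l x - ∫ y, l y ∂p)) ∂p) ≤ lam ^ 2 * σ ^ 2 / 2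

/-- Gibbs' inequality: the integral of the log-likelihood ratio is nonnegative. -/
lemma aux_integral_llr_nonneg {Ω : Type*} [MeasurableSpace Ω] {q ν : Measure Ω}
    [IsProbabilityMeasure q] [IsProbabilityMeasure ν] (h : q ≪ ν)
    (hint : Integrable (llr q ν) q) : 0 ≤ ∫ x, llr q ν x ∂q := by
  have h1 : Integrable (fun x => (ν.rnDeriv q x).toReal) q :=
    Measure.integrable_toReal_rnDeriv
  have h2 : ∫ x, (ν.rnDeriv q x).toReal ∂q ≤ 1 := by
    have := MeasureTheory.Measure.setIntegral_toReal_rnDeriv_le (μ := ν) (ν := q)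
      (s := Set.univ) (by simp)
    simpa using this
  have key : ∀ᵐ x ∂q, -llr q ν x ≤ (ν.rnDeriv q x).toReal - 1 := by
    filter_upwards [exp_neg_llr h] with x hx
    have h3 := Real.add_one_le_exp (-llr q ν x)
    rw [hx] at h3
    linarith
  have h4 : ∫ x, -llr q ν x ∂q ≤ ∫ x, ((ν.rnDeriv q x).toReal - 1) ∂q :=
    integral_mono_ae hint.neg (h1.sub (integrable_const 1)) key
  rw [integral_neg, integral_sub h1 (integrable_const 1)] at h4
  simp only [integral_const, measure_univ, ENNReal.toReal_one, probReal_univ, smul_eq_mul, one_mul] at h4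
  linarith

/-- Donsker–Varadhan inequality. -/
lemma aux_dv {Ω : Type*} [MeasurableSpace Ω] {q p : Measure Ω}
    [IsProbabilityMeasure q] [IsProbabilityMeasure p] {f : Ω → ℝ}
    (hq : q ≪ p) (hllr : Integrable (llr q p) q) (hfq : Integrable f q)
    (hfp : Integrable (fun x => Real.exp (f x)) p) :
    ∫ x, f x ∂q ≤ ∫ x, llr q p x ∂q + Real.log (∫ x, Real.exp (f x) ∂p) := by
  have : IsProbabilityMeasure (p.tilted f) := isProbabilityMeasure_tilted hfp
  have hqt : q ≪ p.tilted f := hq.trans (absolutelyContinuous_tilted hfp)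
  have hint : Integrable (llr q (p.tilted f)) q :=
    integrable_llr_tilted_right hq hfq hllr hfp
  have h0 : 0 ≤ ∫ x, llr q (p.tilted f) x ∂q := aux_integral_llr_nonneg hqt hint
  rw [integral_llr_tilted_right hq hfq hfp hllr] at h0
  linarith

/-- Pointwise bound: `|E_q[l] - E_p[l]| ≤ σ √(2 KL(q‖p))`. -/
lemma aux_pointwise {Ω : Type*} [MeasurableSpace Ω] {q p : Measure Ω}
    [IsProbabilityMeasure q] [IsProbabilityMeasure p] {σ : ℝ} {l : Ω → ℝ}
    (hsg : IsSubGaussian p σ l) (hq : q ≪ p) (hlq : Integrable l q)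
    (hllr : Integrable (llr q p) q) :
    |∫ x, l x ∂q - ∫ x, l x ∂p| ≤ σ * Real.sqrt (2 * ∫ x, llr q p x ∂q) := by
  obtain ⟨hσ, hlp, hmgf⟩ := hsg
  set K := ∫ x, llr q p x ∂q with hKdef
  set c := ∫ x, l x ∂p with hcdef
  set Δ := ∫ x, l x ∂q - c with hΔdef
  have hK : 0 ≤ K := aux_integral_llr_nonneg hq hllr
  have key : ∀ lam : ℝ, lam * Δ ≤ K + lam ^ 2 * σ ^ 2 / 2 := by
    intro lam
    have hfq : Integrable (fun x => lam * (l x - c)) q :=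
      (hlq.sub (integrable_const _)).const_mul lam
    have h := aux_dv hq hllr hfq (hmgf lam).1
    have hfint : ∫ x, lam * (l x - c) ∂q = lam * Δ := by
      rw [integral_const_mul, integral_sub hlq (integrable_const _)]
      simp [hΔdef]
    have hlog := (hmgf lam).2
    rw [hfint, ← hKdef] at h
    exact h.trans (add_le_add (le_refl K) hlog)
  rcases eq_or_lt_of_le hσ with h0 | hσpos
  · have hΔ0 : Δ = 0 := by
      by_contra hne
      have key' : ∀ lam : ℝ, lam * Δ ≤ K := by
        intro lam
        have := key lam
        rw [← h0] at this
        simpa using this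
      have := key' ((K + 1) / Δ * (if 0 < Δ then 1 else 1))
      rcases lt_or_gt_of_ne hne with hneg | hpos
      · have := key' ((K + 1) / Δ)
        rw [div_mul_cancel₀ _ hne] at this
        linarith
      · have := key' ((K + 1) / Δ)
        rw [div_mul_cancel₀ _ hne] at this
        linarith
    rw [hΔ0]
    simp only [abs_zero]
    positivity
  · have hsq : Δ ^ 2 ≤ 2 * σ ^ 2 * K := by
      have h1 := key (Δ / σ ^ 2)
      have hσ2 : (0:ℝ) < σ ^ 2 := by positivity
      have e1 : Δ / σ ^ 2 * Δ = Δ ^ 2 / σ ^ 2 := by ring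
      have e2 : (Δ / σ ^ 2) ^ 2 * σ ^ 2 / 2 = Δ ^ 2 / (2 * σ ^ 2) := by
        field_simp
      rw [e1, e2] at h1
      have h3 : Δ ^ 2 / (2 * σ ^ 2) ≤ K := by
        have : Δ ^ 2 / σ ^ 2 = Δ ^ 2 / (2 * σ ^ 2) + Δ ^ 2 / (2 * σ ^ 2) := by ring
        linarith
      calc Δ ^ 2 = 2 * σ ^ 2 * (Δ ^ 2 / (2 * σ ^ 2)) := by field_simp
        _ ≤ 2 * σ ^ 2 * K := by
            exact mul_le_mul_of_nonneg_left h3 (by positivity)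
    calc |Δ| = Real.sqrt (Δ ^ 2) := (Real.sqrt_sq_eq_abs Δ).symm
      _ ≤ Real.sqrt (2 * σ ^ 2 * K) := Real.sqrt_le_sqrt hsq
      _ = Real.sqrt (σ ^ 2) * Real.sqrt (2 * K) := by
          rw [← Real.sqrt_mul (by positivity)]; ring_nf
      _ = σ * Real.sqrt (2 * K) := by rw [Real.sqrt_sq hσ]

/-- If all exponential moments are at most 1, the variable is a.e. nonpositive. -/
lemma aux_nonpos {Ω : Type*} [MeasurableSpace Ω] {p : Measure Ω} [IsProbabilityMeasure p]
    {X : Ω → ℝ}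
    (h : ∀ t : ℝ, 0 ≤ t → Integrable (fun x => Real.exp (t * X x)) p ∧
      ∫ x, Real.exp (t * X x) ∂p ≤ 1) :
    ∀ᵐ x ∂p, X x ≤ 0 := by
  have hmeas : ∀ ε : ℝ, 0 < ε → p {ω | ε ≤ X ω} = 0 := by
    intro ε hε
    have hb : ∀ n : ℕ, (p {ω | ε ≤ X ω}).toReal ≤ Real.exp (-(n : ℝ) * ε) := by
      intro n
      have hn : (0:ℝ) ≤ n := Nat.cast_nonneg n
      have h1 := ProbabilityTheory.measure_ge_le_exp_mul_mgf (X := X) (μ := p) ε hn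
        (h n hn).1
      refine h1.trans ?_
      have h2 : ProbabilityTheory.mgf X p n ≤ 1 := (h n hn).2
      have h3 : 0 ≤ ProbabilityTheory.mgf X p n := ProbabilityTheory.mgf_nonneg
      calc Real.exp (-(n:ℝ) * ε) * ProbabilityTheory.mgf X p n
          ≤ Real.exp (-(n:ℝ) * ε) * 1 :=
            mul_le_mul_of_nonneg_left h2 (Real.exp_pos _).le
        _ = Real.exp (-(n:ℝ) * ε) := mul_one _
    have hlim : Filter.Tendsto (fun n : ℕ => Real.exp (-(n : ℝ) * ε)) Filter.atTop (nhds 0) := by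
      have h1 : Filter.Tendsto (fun n : ℕ => (n : ℝ) * ε) Filter.atTop Filter.atTop :=
        Filter.Tendsto.atTop_mul_const hε tendsto_natCast_atTop_atTop
      have h2 := Real.tendsto_exp_atBot.comp (Filter.tendsto_neg_atTop_atBot.comp h1)
      simpa [neg_mul, Function.comp_def] using h2
    have h0 : (p {ω | ε ≤ X ω}).toReal ≤ 0 := ge_of_tendsto hlim (Filter.Eventually.of_forall hb)
    have hne := measure_ne_top p {ω | ε ≤ X ω}
    have := le_antisymm h0 ENNReal.toReal_nonneg
    rwa [ENNReal.toReal_eq_zero_iff, or_iff_left hne] at this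
  have hnull : p {ω | 0 < X ω} = 0 := by
    have hsub : {ω | 0 < X ω} ⊆ ⋃ n : ℕ, {ω | 1 / ((n : ℝ) + 1) ≤ X ω} := by
      intro ω hω
      obtain ⟨n, hn⟩ := exists_nat_one_div_lt (show 0 < X ω from hω)
      exact Set.mem_iUnion.2 ⟨n, hn.le⟩
    exact measure_mono_null hsub (measure_iUnion_null fun n => hmeas _ (by positivity))
  rw [ae_iff]
  simpa [not_le] using hnull

/-- A `0`-sub-Gaussian variable is a.e. equal to its mean. -/
lemma aux_const {Ω : Type*} [MeasurableSpace Ω] {p : Measure Ω} [IsProbabilityMeasure p]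
    {l : Ω → ℝ} (hsg : IsSubGaussian p 0 l) :
    l =ᵐ[p] fun _ => ∫ y, l y ∂p := by
  obtain ⟨-, hlp, hmgf⟩ := hsg
  set c := ∫ y, l y ∂p with hc
  have hle1 : ∀ lam : ℝ, ∫ x, Real.exp (lam * (l x - c)) ∂p ≤ 1 := by
    intro lam
    have hpos : 0 < ∫ x, Real.exp (lam * (l x - c)) ∂p := integral_exp_pos (hmgf lam).1
    have hlog := (hmgf lam).2
    simp only [ne_eq, OfNat.ofNat_ne_zero, not_false_eq_true, zero_pow, mul_zero,
      zero_div] at hlog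
    exact (Real.log_nonpos_iff hpos.le).mp (by simpa using hlog)
  have h1 : ∀ᵐ x ∂p, l x - c ≤ 0 :=
    aux_nonpos (fun t _ => ⟨(hmgf t).1, hle1 t⟩)
  have h2 : ∀ᵐ x ∂p, c - l x ≤ 0 := by
    refine aux_nonpos (X := fun x => c - l x) (fun t _ => ?_)
    have e : (fun x => Real.exp (t * (c - l x))) = fun x => Real.exp ((-t) * (l x - c)) := by
      funext x; ring_nf
    exact ⟨by rw [e]; exact (hmgf (-t)).1, by rw [e]; exact hle1 (-t)⟩
  filter_upwards [h1, h2] with x hx1 hx2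
  linarith

/-- **Upper bound on the wireless risk discrepancy.** Let `μ` be a probability measure on
the side-information space `S`, `p` a probability measure on the hypothesis–sample space
`Ω`, and `s ↦ κ s` a Markov kernel from `S` to `Ω`.  If the loss `l : Ω → ℝ` is
`σ`-sub-Gaussian under `p`, is `κ s`-integrable for `μ`-a.e. `s`, each `κ s` is absolutely
continuous w.r.t. `p`, `s ↦ KL(κ s‖p)` is `μ`-integrable (finite integral), and
`s ↦ |E_{κ s}[l] − E_p[l]|` is `μ`-integrable, then
`∫ |E_{κ s}[l] − E_p[l]| dμ(s) ≤ σ √(2 ∫ KL(κ s‖p) dμ(s))`. -/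
theorem wireless_risk_discrepancy_le {S Ω : Type*} [MeasurableSpace S] [MeasurableSpace Ω]
    (μ : Measure S) [IsProbabilityMeasure μ] (p : Measure Ω) [IsProbabilityMeasure p]
    (κ : Kernel S Ω) [IsMarkovKernel κ] (σ : ℝ) (l : Ω → ℝ)
    (hsg : IsSubGaussian p σ l)
    (hlint : ∀ᵐ s ∂μ, Integrable l (κ s))
    (hac : ∀ s, κ s ≪ p)
    (hklfin : ∫⁻ s, klDiv (κ s) p ∂μ ≠ ⊤)
    (hdisc : Integrable (fun s => |∫ x, l x ∂(κ s) - ∫ x, l x ∂p|) μ) :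
    ∫ s, |∫ x, l x ∂(κ s) - ∫ x, l x ∂p| ∂μ ≤
      σ * Real.sqrt (2 * (∫⁻ s, klDiv (κ s) p ∂μ).toReal) := by
  rcases eq_or_lt_of_le hsg.1 with hzero | hσpos
  · -- σ = 0 : the loss is a.e. constant under p, hence under every κ s.
    have hconst : l =ᵐ[p] fun _ => ∫ y, l y ∂p := aux_const (hzero ▸ hsg)
    have hΔ : ∀ s, ∫ x, l x ∂(κ s) = ∫ x, l x ∂p := by
      intro s
      have h1 : l =ᵐ[κ s] fun _ => ∫ y, l y ∂p := hconst.filter_mono ((hac s).ae_le)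
      rw [integral_congr_ae h1, integral_const]
      simp
    simp only [hΔ, sub_self, abs_zero, integral_zero]
    exact mul_nonneg hsg.1 (Real.sqrt_nonneg _)
  · -- σ > 0
    set c := ∫ x, l x ∂p with hc
    set D := fun s => ENNReal.ofReal |∫ x, l x ∂(κ s) - c| with hD
    have hDmeas : AEMeasurable D μ := hdisc.aestronglyMeasurable.aemeasurable.ennreal_ofReal
    have h2σ : (0:ℝ) < 2 * σ ^ 2 := by positivity
    have hpt : ∀ᵐ s ∂μ, D s ^ 2 ≤ ENNReal.ofReal (2 * σ ^ 2) * klDiv (κ s) p := by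
      filter_upwards [hlint] with s hs
      by_cases hfin : klDiv (κ s) p = ⊤
      · rw [hfin, ENNReal.mul_top]
        · exact le_top
        · simp [ENNReal.ofReal_eq_zero, not_le, h2σ, hσpos.ne']
      · have hcond : κ s ≪ p ∧ Integrable (llr (κ s) p) (κ s) := by
          by_contra hcon
          rw [klDiv, if_neg hcon] at hfin
          exact hfin rfl
        have hb := aux_pointwise hsg (hac s) hs hcond.2
        have hK0 : 0 ≤ ∫ x, llr (κ s) p x ∂(κ s) :=
          aux_integral_llr_nonneg (hac s) hcond.2
        have hkl : klDiv (κ s) p = ENNReal.ofReal (∫ x, llr (κ s) p x ∂(κ s)) := by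
          rw [klDiv, if_pos hcond]
        rw [hkl, ← ENNReal.ofReal_mul h2σ.le]
        calc D s ^ 2 = ENNReal.ofReal (|∫ x, l x ∂(κ s) - c| ^ 2) := by
              rw [hD, ← ENNReal.ofReal_pow (abs_nonneg _)]
          _ ≤ ENNReal.ofReal (2 * σ ^ 2 * ∫ x, llr (κ s) p x ∂(κ s)) := by
              apply ENNReal.ofReal_le_ofReal
              have h4 := pow_le_pow_left₀ (abs_nonneg _) hb 2
              calc |∫ x, l x ∂(κ s) - c| ^ 2
                  ≤ (σ * Real.sqrt (2 * ∫ x, llr (κ s) p x ∂(κ s))) ^ 2 := h4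
                _ = σ ^ 2 * (Real.sqrt (2 * ∫ x, llr (κ s) p x ∂(κ s))) ^ 2 := by ring
                _ = 2 * σ ^ 2 * ∫ x, llr (κ s) p x ∂(κ s) := by
                    rw [Real.sq_sqrt (by linarith : (0:ℝ) ≤ 2 * ∫ x, llr (κ s) p x ∂(κ s))]
                    ring
    set L := ∫⁻ s, klDiv (κ s) p ∂μ with hL
    have hD2 : ∫⁻ s, D s ^ 2 ∂μ ≤ ENNReal.ofReal (2 * σ ^ 2) * L := by
      calc ∫⁻ s, D s ^ 2 ∂μ ≤ ∫⁻ s, ENNReal.ofReal (2 * σ ^ 2) * klDiv (κ s) p ∂μ :=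
            lintegral_mono_ae hpt
        _ = ENNReal.ofReal (2 * σ ^ 2) * L :=
            lintegral_const_mul' _ _ ENNReal.ofReal_ne_top
    have hCS : ∫⁻ s, D s ∂μ ≤ (∫⁻ s, D s ^ 2 ∂μ) ^ (1/2 : ℝ) := by
      have hconj : Real.HolderConjugate 2 2 := by constructor <;> norm_num
      have h := ENNReal.lintegral_mul_le_Lp_mul_Lq μ hconj hDmeas
        (aemeasurable_const (b := (1:ℝ≥0∞)))
      simp only [Pi.mul_apply, mul_one, ENNReal.one_rpow, lintegral_const, measure_univ,
        ENNReal.rpow_two] at h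
      calc ∫⁻ s, D s ∂μ ≤ (∫⁻ s, D s ^ (2:ℝ) ∂μ) ^ (1/2 : ℝ) * 1 ^ (1/2 : ℝ) := by
            simpa using h
        _ = (∫⁻ s, D s ^ 2 ∂μ) ^ (1/2 : ℝ) := by
            simp [ENNReal.rpow_two]
    have hfinal : ∫⁻ s, D s ∂μ ≤ (ENNReal.ofReal (2 * σ ^ 2) * L) ^ (1/2 : ℝ) :=
      hCS.trans (ENNReal.rpow_le_rpow hD2 (by norm_num))
    have hLHS : ∫ s, |∫ x, l x ∂(κ s) - c| ∂μ = (∫⁻ s, D s ∂μ).toReal := by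
      rw [integral_eq_lintegral_of_nonneg_ae (Filter.Eventually.of_forall fun s => abs_nonneg _)
        hdisc.aestronglyMeasurable]
    have hRne : (ENNReal.ofReal (2 * σ ^ 2) * L) ^ (1/2 : ℝ) ≠ ⊤ :=
      ENNReal.rpow_ne_top_of_nonneg (by norm_num) (ENNReal.mul_ne_top ENNReal.ofReal_ne_top hklfin)
    have hmono := ENNReal.toReal_mono hRne hfinal
    rw [hLHS]
    refine hmono.trans_eq ?_
    rw [← ENNReal.toReal_rpow, ENNReal.toReal_mul, ENNReal.toReal_ofReal h2σ.le,
      ← Real.sqrt_eq_rpow,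
      show 2 * σ ^ 2 * L.toReal = σ ^ 2 * (2 * L.toReal) by ring,
      Real.sqrt_mul (sq_nonneg σ), Real.sqrt_sq hσpos.le]
end

section
/- Let σ > 0, c > 0, D ≥ 0 and a ∈ ℝ. If for every λ with 0 < λ < 1/c one has λa − σ²λ²/(2(1 − cλ)) ≤ D, then a ≤ σ√(2D) + c·D. -/
/-- **Sub-Gamma discriminant argument.** For `σ > 0`, `c > 0`, `D ≥ 0` and `a ∈ ℝ`: if
`λa − σ²λ²/(2(1 − cλ)) ≤ D` for every `λ` with `0 < λ < 1/c`, then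
`a ≤ σ√(2D) + c·D`. -/
theorem le_sqrt_add_of_subGamma_ineq (σ c D a : ℝ) (hσ : 0 < σ) (hc : 0 < c)
    (hD : 0 ≤ D)
    (h : ∀ lam : ℝ, 0 < lam → lam < 1 / c →
      lam * a - σ ^ 2 * lam ^ 2 / (2 * (1 - c * lam)) ≤ D) :
    a ≤ σ * Real.sqrt (2 * D) + c * D := by
  rcases eq_or_lt_of_le hD with hD0 | hDpos
  · -- D = 0 case: show a ≤ 0 by a limiting argument
    subst hD0
    simp only [mul_zero, Real.sqrt_zero, add_zero]
    by_contra hlt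
    push_neg at hlt
    set lam := min (a / (2 * σ ^ 2)) (1 / (2 * c)) with hlam
    have hσ2 : 0 < σ ^ 2 := by positivity
    have hl1 : 0 < lam := lt_min (by positivity) (by positivity)
    have hl2 : lam ≤ 1 / (2 * c) := min_le_right _ _
    have hl3 : lam ≤ a / (2 * σ ^ 2) := min_le_left _ _
    have hcl : c * lam ≤ 1 / 2 := by
      calc c * lam ≤ c * (1 / (2 * c)) := by nlinarith
        _ = 1 / 2 := by field_simp
    have hl4 : lam < 1 / c := lt_of_le_of_lt hl2 (by rw [div_lt_div_iff₀ (by positivity) hc]; nlinarith)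
    have key := h lam hl1 hl4
    have hpos : 0 < 2 * (1 - c * lam) := by nlinarith
    have hfrac : σ ^ 2 * lam ^ 2 / (2 * (1 - c * lam)) ≤ σ ^ 2 * lam ^ 2 := by
      rw [div_le_iff₀ hpos]
      nlinarith [mul_le_mul_of_nonneg_left (by linarith : (1:ℝ) ≤ 2*(1-c*lam)) (by positivity : (0:ℝ) ≤ σ^2*lam^2)]
    have : lam * a - σ ^ 2 * lam ^ 2 > 0 := by
      have hσl : σ ^ 2 * lam ≤ a / 2 := by
        rw [le_div_iff₀ (by positivity : (0:ℝ) < 2 * σ ^ 2)] at hl3; nlinarith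
      nlinarith
    linarith
  · -- D > 0 case
    set s := Real.sqrt (2 * D) with hs
    have hs0 : 0 < s := Real.sqrt_pos.mpr (by linarith)
    have hs2 : s ^ 2 = 2 * D := Real.sq_sqrt (by linarith)
    have hden : 0 < σ + c * s := by positivity
    set lam := s / (σ + c * s) with hlam
    have hl1 : 0 < lam := by positivity
    have hl4 : lam < 1 / c := by
      rw [div_lt_div_iff₀ hden hc]
      nlinarith
    have key := h lam hl1 hl4
    have h1 : 1 - c * lam = σ / (σ + c * s) := by
      field_simp [hlam]
      rw [hlam, sub_mul, mul_assoc, div_mul_cancel₀ _ hden.ne']; ring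
    have hpos : 0 < 2 * (1 - c * lam) := by rw [h1]; positivity
    rw [h1] at key
    rw [hlam] at key
    have key2 : s / (σ + c * s) * a - σ * s ^ 2 / (2 * (σ + c * s)) ≤ D := by
      have : σ ^ 2 * (s / (σ + c * s)) ^ 2 / (2 * (σ / (σ + c * s)))
          = σ * s ^ 2 / (2 * (σ + c * s)) := by
        field_simp
      linarith [key, this.symm.le.trans_eq rfl, this ▸ key]
    -- multiply by (σ + c*s)/s
    rw [div_mul_eq_mul_div, div_sub_div _ _ (ne_of_gt hden) (by positivity), div_le_iff₀ (by positivity)] at key2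
    have : s * a ≤ (σ + c * s) * D + σ * s ^ 2 / 2 := by nlinarith
    rw [hs2] at this
    calc a = (s * a) / s := by field_simp
      _ ≤ ((σ + c * s) * D + σ * (2 * D) / 2) / s := by
          apply div_le_div_of_nonneg_right this hs0.le |>.trans_eq rfl
      _ = σ * s + c * D := by
          rw [div_eq_iff (ne_of_gt hs0)]
          linear_combination (-σ) * hs2
end
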